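/- For every integer d ≥ 2, every complex root q of the polynomial q^d − q^{d−1} + 2 = 0 satisfies |q| > 1, except that when d is odd, q = −1 is a root with |q| = 1; moreover −1 is a root if and only if d is odd, and no root lies on the unit circle other than possibly −1. -/

import Mathlib

-- key lemma: root with |q| ≤ 1 implies q = -1
lemma key (d : ℕ) (hd : 2 ≤ d) (q : ℂ) (hq : q ^ d - q ^ (d - 1) + 2 = 0)
    (hle : ‖q‖ ≤ 1) : q = -1 := by
  have hd1 : d - 1 + 1 = d := by omega
  have hfac : q ^ (d - 1) * (q - 1) = -2 := by
    have h : q ^ d = q ^ (d - 1) * q := by rw [← pow_succ, hd1]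
    rw [mul_sub, ← h]; linear_combination hq
  have habs : ‖q‖ ^ (d - 1) * ‖q - 1‖ = 2 := by
    have := congrArg norm hfac
    simpa [map_mul, map_pow] using this
  have htri : ‖q - 1‖ ≤ ‖q‖ + 1 := by
    simpa using norm_sub_le q 1
  have h2 : ‖q - 1‖ ≤ 2 := by linarith
  have hnn : (0 : ℝ) ≤ ‖q‖ ^ (d - 1) := pow_nonneg (norm_nonneg q) _
  -- first show |q| = 1
  have hq1 : ‖q‖ = 1 := by
    by_contra h
    have hlt : ‖q‖ < 1 := lt_of_le_of_ne hle h
    have hpow : ‖q‖ ^ (d - 1) < 1 :=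
      pow_lt_one₀ (norm_nonneg q) hlt (by omega)
    have : (2 : ℝ) < 2 := by
      calc (2 : ℝ) = ‖q‖ ^ (d - 1) * ‖q - 1‖ := habs.symm
        _ ≤ ‖q‖ ^ (d - 1) * 2 := mul_le_mul_of_nonneg_left h2 hnn
        _ < 2 := by linarith
    linarith
  have habs2 : ‖q - 1‖ = 2 := by
    rw [hq1, one_pow, one_mul] at habs; exact habs
  have hn1 : Complex.normSq q = 1 := by rw [← Complex.sq_norm, hq1]; norm_num
  have hn2 : Complex.normSq (q - 1) = 4 := by rw [← Complex.sq_norm, habs2]; norm_num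
  have hn2' : (q.re - 1) * (q.re - 1) + q.im * q.im = 4 := by
    simpa [Complex.normSq_apply] using hn2
  have hn1' : q.re * q.re + q.im * q.im = 1 := by
    simpa [Complex.normSq_apply] using hn1
  have hre : q.re = -1 := by nlinarith
  have him : q.im = 0 := by nlinarith
  apply Complex.ext <;> simp [hre, him]

theorem stmt_11 (d : ℕ) (hd : 2 ≤ d) :
    (∀ q : ℂ, q ^ d - q ^ (d - 1) + 2 = 0 → 1 < ‖q‖ ∨ (q = -1 ∧ Odd d)) ∧
    ((-1 : ℂ) ^ d - (-1 : ℂ) ^ (d - 1) + 2 = 0 ↔ Odd d) ∧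
    (∀ q : ℂ, q ^ d - q ^ (d - 1) + 2 = 0 → ‖q‖ = 1 → q = -1) := by
  have hd1 : d - 1 + 1 = d := by omega
  have hpd : (-1 : ℂ) ^ d = -(-1) ^ (d - 1) := by
    conv_lhs => rw [← hd1]
    rw [pow_succ]; ring
  have hiff : ((-1 : ℂ) ^ d - (-1 : ℂ) ^ (d - 1) + 2 = 0 ↔ Odd d) := by
    constructor
    · intro h
      rw [hpd] at h
      have h1 : ((-1 : ℂ)) ^ (d - 1) = 1 := by linear_combination -h / 2
      have heven : Even (d - 1) := by
        rcases Nat.even_or_odd (d - 1) with he | ho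
        · exact he
        · rw [ho.neg_one_pow] at h1; norm_num at h1
      have := heven.add_one
      rwa [hd1] at this
    · intro hodd
      have h1 : (-1 : ℂ) ^ d = -1 := hodd.neg_one_pow
      have h2 : (-1 : ℂ) ^ (d - 1) = 1 := by
        have he : Even (d - 1) := by
          rcases hodd with ⟨k, hk⟩; exact ⟨k, by omega⟩
        exact he.neg_one_pow
      rw [h1, h2]; ring
  refine ⟨fun q hq => ?_, hiff, fun q hq h1 => key d hd q hq h1.le⟩
  rcases lt_or_ge 1 (‖q‖) with h | h
  · exact Or.inl h
  · have hq1 := key d hd q hq h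
    subst hq1
    exact Or.inr ⟨rfl, hiff.mp hq⟩
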